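/- Let A be a supercommutative ring, v an odd derivation with v² = 0, and θ an odd element with v(θ) = 1. If A is finitely generated as an algebra over a subring C ⊆ ker(v), then ker(v) is finitely generated as an algebra over C. -/

import Mathlib

/-- A supercommutative ring: a ring `A` with a `ℤ/2`-grading `A = ev ⊕ odd`
such that even elements are central, odd elements anticommute and square to zero. -/
class SuperGrading (A : Type*) [Ring A] where
  ev : AddSubgroup A
  odd : AddSubgroup A
  one_mem_ev : (1 : A) ∈ ev
  decomp : ∀ a : A, ∃ a₀ ∈ ev, ∃ a₁ ∈ odd, a = a₀ + a₁
  decomp_unique : ∀ a₀ ∈ ev, ∀ a₁ ∈ odd, a₀ + a₁ = 0 → a₀ = 0 ∧ a₁ = 0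
  mul_ev_ev : ∀ a ∈ ev, ∀ b ∈ ev, a * b ∈ ev
  mul_ev_odd : ∀ a ∈ ev, ∀ b ∈ odd, a * b ∈ odd
  mul_odd_ev : ∀ a ∈ odd, ∀ b ∈ ev, a * b ∈ odd
  mul_odd_odd : ∀ a ∈ odd, ∀ b ∈ odd, a * b ∈ ev
  comm_ev_ev : ∀ a ∈ ev, ∀ b ∈ ev, a * b = b * a
  comm_ev_odd : ∀ a ∈ ev, ∀ b ∈ odd, a * b = b * a
  anticomm_odd : ∀ a ∈ odd, ∀ b ∈ odd, a * b = -(b * a)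
  odd_sq : ∀ a ∈ odd, a * a = 0

open SuperGrading

/-- An odd derivation of a supercommutative ring, with square zero. -/
structure OddDer (A : Type*) [Ring A] [SuperGrading A] where
  v : A → A
  map_add : ∀ a b : A, v (a + b) = v a + v b
  map_ev : ∀ a ∈ ev (A := A), v a ∈ odd (A := A)
  map_odd : ∀ a ∈ odd (A := A), v a ∈ ev (A := A)
  leib_ev : ∀ a ∈ ev (A := A), ∀ b : A, v (a * b) = v a * b + a * v b
  leib_odd : ∀ a ∈ odd (A := A), ∀ b : A, v (a * b) = v a * b - a * v b
  sq_zero : ∀ a : A, v (v a) = 0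

/-- if `v θ = 1` for an odd `θ` and `A` is finitely generated as an
algebra over a subring `C ⊆ ker v`, then `ker v` is finitely generated over `C`. -/
theorem stmt1 {A : Type*} [Ring A] [SuperGrading A] (D : OddDer A)
    (θ : A) (hθ : θ ∈ odd (A := A)) (hvθ : D.v θ = 1)
    (C : Subring A) (hC : ∀ c ∈ C, D.v c = 0)
    (s : Finset A) (hs : Subring.closure ((C : Set A) ∪ (s : Set A)) = ⊤) :
    ∃ t : Finset A, (∀ x ∈ t, D.v x = 0) ∧
      ∀ a : A, D.v a = 0 → a ∈ Subring.closure ((C : Set A) ∪ (t : Set A)) := by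
  classical
  have hv0 : D.v 0 = 0 := by
    have h := D.map_add 0 0
    rw [add_zero] at h
    exact (right_eq_add.mp h)
  have hv1 : D.v 1 = 0 := by
    have h := D.leib_ev 1 one_mem_ev 1
    rw [one_mul, one_mul, mul_one] at h
    exact (right_eq_add.mp h)
  have hθθ : θ * θ = 0 := odd_sq θ hθ
  have hθAθ : ∀ a : A, θ * a * θ = 0 := by
    intro a
    obtain ⟨a0, h0, a1, h1, rfl⟩ := decomp a
    have c0 : a0 * θ = θ * a0 := comm_ev_odd a0 h0 θ hθ
    have c1 : a1 * θ = -(θ * a1) := anticomm_odd a1 h1 θ hθ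
    calc θ * (a0 + a1) * θ = θ * (a0 * θ) + θ * (a1 * θ) := by noncomm_ring
      _ = θ * (θ * a0) + θ * (-(θ * a1)) := by rw [c0, c1]
      _ = (θ * θ) * a0 - (θ * θ) * a1 := by noncomm_ring
      _ = 0 := by rw [hθθ]; noncomm_ring
  have hLeib : ∀ a b : A, θ * D.v (a * b) = θ * D.v a * b + a * (θ * D.v b) := by
    intro a b
    obtain ⟨a0, h0, a1, h1, rfl⟩ := decomp a
    have c0 : a0 * θ = θ * a0 := comm_ev_odd a0 h0 θ hθ
    have c1 : a1 * θ = -(θ * a1) := anticomm_odd a1 h1 θ hθ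
    rw [add_mul, D.map_add, D.leib_ev a0 h0 b, D.leib_odd a1 h1 b, D.map_add]
    have e0 : θ * (a0 * D.v b) = a0 * (θ * D.v b) := by
      rw [← mul_assoc, ← c0, mul_assoc]
    have c1' : θ * a1 = -(a1 * θ) := by rw [c1, neg_neg]
    have e1 : θ * (a1 * D.v b) = -(a1 * (θ * D.v b)) := by
      rw [← mul_assoc, c1', neg_mul, mul_assoc]
    calc θ * (D.v a0 * b + a0 * D.v b + (D.v a1 * b - a1 * D.v b))
        = θ * D.v a0 * b + θ * D.v a1 * b + θ * (a0 * D.v b) - θ * (a1 * D.v b) := by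
          noncomm_ring
      _ = θ * D.v a0 * b + θ * D.v a1 * b + a0 * (θ * D.v b) + a1 * (θ * D.v b) := by
          rw [e0, e1]; noncomm_ring
      _ = θ * (D.v a0 + D.v a1) * b + (a0 + a1) * (θ * D.v b) := by noncomm_ring
  -- the homotopy projection P a = a - θ * v a is a ring hom
  have hvP : ∀ a : A, D.v (a - θ * D.v a) = 0 := by
    intro a
    have hvθa : D.v (θ * D.v a) = D.v a := by
      rw [D.leib_odd θ hθ (D.v a), hvθ, one_mul, D.sq_zero, mul_zero, sub_zero]
    have h := D.map_add (a - θ * D.v a) (θ * D.v a)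
    rw [sub_add_cancel, hvθa] at h
    exact right_eq_add.mp h
  have hPfix : ∀ a : A, D.v a = 0 → a - θ * D.v a = a := by
    intro a ha; rw [ha, mul_zero, sub_zero]
  let φ : A →+* A :=
    { toFun := fun a => a - θ * D.v a
      map_one' := by show (1 : A) - θ * D.v 1 = 1; rw [hv1, mul_zero, sub_zero]
      map_zero' := by show (0 : A) - θ * D.v 0 = 0; rw [hv0, mul_zero, sub_zero]
      map_add' := by
        intro a b
        show a + b - θ * D.v (a + b) = (a - θ * D.v a) + (b - θ * D.v b)
        rw [D.map_add, mul_add]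
        abel
      map_mul' := by
        intro a b
        have h0 : θ * D.v a * (θ * D.v b) = 0 := by
          rw [← mul_assoc (θ * D.v a) θ (D.v b), hθAθ (D.v a), zero_mul]
        have expand : (a - θ * D.v a) * (b - θ * D.v b)
            = a * b - (θ * D.v a * b + a * (θ * D.v b)) + θ * D.v a * (θ * D.v b) := by
          noncomm_ring
        show a * b - θ * D.v (a * b) = (a - θ * D.v a) * (b - θ * D.v b)
        rw [expand, h0, add_zero, hLeib a b] }
  refine ⟨s.image (fun x => x - θ * D.v x), ?_, ?_⟩
  · intro x hx
    obtain ⟨y, -, rfl⟩ := Finset.mem_image.mp hx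
    exact hvP y
  · intro a ha
    have h1 : a ∈ Subring.closure ((C : Set A) ∪ (s : Set A)) := by
      rw [hs]; exact Subring.mem_top a
    have h2 : φ a ∈ (Subring.closure ((C : Set A) ∪ (s : Set A))).map φ :=
      Subring.mem_map.mpr ⟨a, h1, rfl⟩
    rw [RingHom.map_closure] at h2
    have hφa : φ a = a := hPfix a ha
    rw [hφa] at h2
    refine Subring.closure_mono ?_ h2
    rintro x ⟨y, hy, rfl⟩
    rcases hy with hy | hy
    · left
      have : φ y = y := hPfix y (hC y hy)
      rw [this]; exact hy
    · right
      exact Finset.mem_coe.mpr (Finset.mem_image.mpr ⟨y, hy, rfl⟩)
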